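/- Any non-zero strongly admissible pattern p can be decomposed into a sum p = p₁ + q₁ + p₂ + q₂ + ⋯ + p_m + q_m (in consecutive blocks of variables), where for each i ∈ {1,…,m} all coefficients of the pattern pᵢ are positive, and the pattern qᵢ is admissible with coefficients summing to zero. -/

import Mathlib

/-- A numerical semigroup: an additive submonoid of ℕ with finite complement. -/
def IsNumericalSemigroup (S : Set ℕ) : Prop :=
  0 ∈ S ∧ (∀ a ∈ S, ∀ b ∈ S, a + b ∈ S) ∧ Sᶜ.Finite

/-- Evaluation of a pattern (list of coefficients a₁,…,aₙ) at s₁,…,sₙ. -/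
def patEval (p : List ℤ) (s : ℕ → ℕ) : ℤ :=
  ∑ i ∈ Finset.range p.length, p.getD i 0 * (s i : ℤ)

/-- `S` admits the pattern `p`: p(s₁,…,sₙ) ∈ S for all s₁ ≥ ⋯ ≥ sₙ in S. -/
def AdmitsPat (S : Set ℕ) (p : List ℤ) : Prop :=
  ∀ s : ℕ → ℕ, (∀ i, s i ∈ S) → (∀ i j, i ≤ j → s j ≤ s i) →
    ∃ m ∈ S, (m : ℤ) = patEval p s

/-- A pattern is admissible if it is admitted by some numerical semigroup. -/
def Admissible (p : List ℤ) : Prop :=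
  ∃ S : Set ℕ, IsNumericalSemigroup S ∧ AdmitsPat S p

/-- The derivative p' of a pattern. -/
def pderiv : List ℤ → List ℤ
  | [] => []
  | a :: q => if a = 1 then q else (a - 1) :: q

/-- The admissibility degree: least k such that p⁽ᵏ⁾ is not admissible, or ∞. -/
noncomputable def adDeg (p : List ℤ) : ℕ∞ :=
  sInf ((fun m : ℕ => (m : ℕ∞)) '' {m : ℕ | ¬ Admissible (pderiv^[m] p)})

/-- The partial sum bᵢ = a₁ + ⋯ + aᵢ of the coefficients of `p`. -/
def psum (p : List ℤ) (i : ℕ) : ℤ :=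
  ∑ j ∈ Finset.range i, p.getD j 0

/-- The i-th coefficient aᵢ of `p` (1-indexed), zero outside {1,…,n}. -/
def coeffFn (p : List ℤ) (i : ℕ) : ℤ :=
  if i = 0 then 0 else p.getD (i - 1) 0

lemma psum_zero' (p : List ℤ) : psum p 0 = 0 := by simp [psum]

lemma psum_succ' (p : List ℤ) (k : ℕ) : psum p (k+1) = psum p k + p.getD k 0 := by
  simp [psum, Finset.sum_range_succ]

lemma psum_cons' (a : ℤ) (q : List ℤ) (k : ℕ) :
    psum (a :: q) (k+1) = a + psum q k := by
  induction k with
  | zero => simp [psum]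
  | succ k ih =>
      rw [psum_succ', ih, psum_succ', List.getD_cons_succ]
      ring

lemma exists_pos_mem (S : Set ℕ) (hS : IsNumericalSemigroup S) : ∃ M : ℕ, 0 < M ∧ M ∈ S := by
  obtain ⟨-, -, hfin⟩ := hS
  obtain ⟨B, hB⟩ := hfin.bddAbove
  refine ⟨B + 1, Nat.succ_pos B, ?_⟩
  by_contra hc
  exact absurd (hB hc) (by omega)

lemma psum_nonneg_of_admissible (p : List ℤ) (h : Admissible p) :
    ∀ k, k ≤ p.length → 0 ≤ psum p k := by
  obtain ⟨S, hS, hA⟩ := h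
  obtain ⟨M, hMpos, hMS⟩ := exists_pos_mem S hS
  intro k hk
  obtain ⟨v, hvS, hval⟩ := hA (fun i => if i < k then M else 0)
    (fun i => by split
                 · exact hMS
                 · exact hS.1)
    (fun i j hij => by split <;> split <;> omega)
  have hcalc : patEval p (fun i => if i < k then M else 0) = psum p k * (M : ℤ) := by
    rw [patEval, psum, Finset.sum_mul, Finset.range_eq_Ico,
        ← Finset.sum_Ico_consecutive _ (Nat.zero_le k) hk]
    have h2 : ∀ i ∈ Finset.Ico k p.length,
        p.getD i 0 * (((if i < k then M else 0 : ℕ)) : ℤ) = 0 := by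
      intro i hi
      simp only [Finset.mem_Ico] at hi
      rw [if_neg (by omega)]
      simp
    rw [Finset.sum_congr rfl h2, Finset.sum_const_zero, add_zero]
    rw [Finset.range_eq_Ico]
    refine Finset.sum_congr rfl fun i hi => ?_
    simp only [Finset.mem_Ico] at hi
    rw [if_pos hi.2]
  rw [hcalc] at hval
  have hv0 : (0:ℤ) ≤ (v:ℤ) := Int.natCast_nonneg v
  nlinarith [hval, hv0, Int.natCast_pos.mpr hMpos]

lemma admissible_pair (p : List ℤ) (hstrong : 2 ≤ adDeg p) :
    Admissible p ∧ Admissible (pderiv p) := by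
  constructor
  · by_contra hc
    have h0 : (0 : ℕ∞) ∈ (fun m : ℕ => (m : ℕ∞)) '' {m : ℕ | ¬ Admissible (pderiv^[m] p)} :=
      ⟨0, by simpa using hc, rfl⟩
    have h1 := le_trans hstrong (sInf_le h0)
    simp at h1
  · by_contra hc
    have h0 : (1 : ℕ∞) ∈ (fun m : ℕ => (m : ℕ∞)) '' {m : ℕ | ¬ Admissible (pderiv^[m] p)} :=
      ⟨1, by simpa [Function.iterate_one] using hc, rfl⟩
    have h1 := le_trans hstrong (sInf_le h0)
    norm_num at h1

lemma psum_pos_of_strong (p : List ℤ) (hp : ∀ a ∈ p, a ≠ 0) (hne : p ≠ [])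
    (h1 : Admissible p) (h2 : Admissible (pderiv p)) :
    ∀ k, 1 ≤ k → k ≤ p.length → 1 ≤ psum p k := by
  obtain ⟨a, q⟩ : ∃ a q, p = a :: q := by
    cases p with
    | nil => exact absurd rfl hne
    | cons a q => exact ⟨a, q, rfl⟩
  obtain ⟨q, rfl⟩ := q
  have ha0 : a ≠ 0 := hp a List.mem_cons_self
  have ha1 : 1 ≤ a := by
    have := psum_nonneg_of_admissible _ h1 1 (by simp)
    rw [show (1:ℕ) = 0 + 1 from rfl, psum_cons', psum_zero'] at this
    omega
  intro k hk1 hkn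
  obtain ⟨k', rfl⟩ : ∃ k', k = k' + 1 := ⟨k - 1, by omega⟩
  rw [psum_cons']
  simp only [List.length_cons] at hkn
  by_cases ha : a = 1
  · have hd : pderiv (a :: q) = q := by simp [pderiv, ha]
    rw [hd] at h2
    have := psum_nonneg_of_admissible _ h2 k' (by omega)
    omega
  · have hd : pderiv (a :: q) = (a - 1) :: q := by simp [pderiv, ha]
    rw [hd] at h2
    have := psum_nonneg_of_admissible _ h2 (k' + 1) (by simp; omega)
    rw [psum_cons'] at this
    omega

lemma sum_Icc_coeff (p : List ℤ) (a u : ℕ) (hau : a ≤ u) :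
    ∑ i ∈ Finset.Icc (a+1) u, coeffFn p i = psum p u - psum p a := by
  induction u, hau using Nat.le_induction with
  | base => simp
  | succ u hau ih =>
      rw [Finset.sum_Icc_succ_top (by omega : a + 1 ≤ u + 1), ih, psum_succ']
      have : coeffFn p (u+1) = p.getD u 0 := by simp [coeffFn]
      rw [this]; ring


/-- Any non-zero strongly admissible pattern p decomposes as
p = p₁ + q₁ + ⋯ + p_m + q_m in consecutive blocks of variables, where each pⱼ
has positive coefficients and each qⱼ is admissible with coefficient sum zero. -/
theorem stmt_3 (p : List ℤ) (hp : ∀ a ∈ p, a ≠ 0) (hne : p ≠ [])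
    (hstrong : 2 ≤ adDeg p) :
    ∃ m : ℕ, 1 ≤ m ∧ ∃ (P Q : ℕ → ℕ → ℤ) (h t : ℕ → ℕ),
      t 0 = 0 ∧ t m = p.length ∧
      (∀ i : ℕ, coeffFn p i = ∑ j ∈ Finset.Icc 1 m, (P j i + Q j i)) ∧
      ∀ j ∈ Finset.Icc 1 m,
        -- pⱼ occupies the block {t(j−1)+1,…,h j}, with positive coefficients
        t (j - 1) < h j ∧ h j ≤ t j ∧
        (∀ i : ℕ, i ∉ Finset.Icc (t (j - 1) + 1) (h j) → P j i = 0) ∧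
        (∀ i ∈ Finset.Icc (t (j - 1) + 1) (h j), 0 < P j i) ∧
        -- qⱼ occupies the block {h j,…,t j}, admissible with coefficient sum zero
        (∀ i : ℕ, i ∉ Finset.Icc (h j) (t j) → Q j i = 0) ∧
        (∀ u ∈ Finset.Icc (h j) (t j), 0 ≤ ∑ i ∈ Finset.Icc (h j) u, Q j i) ∧
        (∑ i ∈ Finset.Icc (h j) (t j), Q j i) = 0 := by
  classical
  obtain ⟨hadm, hadm'⟩ := admissible_pair p hstrong
  set n := p.length with hn
  have hn1 : 1 ≤ n := List.length_pos_iff.mpr hne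
  set b : ℕ → ℤ := psum p with hb
  have hb0 : b 0 = 0 := psum_zero' p
  have hbpos : ∀ k, 1 ≤ k → k ≤ n → 1 ≤ b k := psum_pos_of_strong p hp hne hadm hadm'
  set T : Finset ℕ := (Finset.range (n+1)).filter
      (fun u => ∀ w, u < w → w ≤ n → b u < b w) with hT
  have hmemT : ∀ u, u ∈ T ↔ u ≤ n ∧ ∀ w, u < w → w ≤ n → b u < b w := by
    intro u; simp [hT, Finset.mem_filter, Finset.mem_range, Nat.lt_succ_iff]
  have h0T : 0 ∈ T := (hmemT 0).mpr ⟨Nat.zero_le n, fun w hw hwn => by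
    rw [hb0]; exact lt_of_lt_of_le zero_lt_one (hbpos w hw hwn)⟩
  have hnT : n ∈ T := (hmemT n).mpr ⟨le_refl n, fun w hw hwn => absurd hwn (by omega)⟩
  have L1 : ∀ d u, n - u ≤ d → u ≤ n → ∃ w, w ∈ T ∧ u ≤ w ∧ b w ≤ b u := by
    intro d
    induction d with
    | zero =>
        intro u hd hu
        have : u = n := by omega
        subst this; exact ⟨n, hnT, le_refl n, le_refl _⟩
    | succ d ih =>
        intro u hd hu
        by_cases huT : u ∈ T
        · exact ⟨u, huT, le_refl u, le_refl _⟩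
        · have hnot : ¬ (u ≤ n ∧ ∀ w, u < w → w ≤ n → b u < b w) :=
            fun hc => huT ((hmemT u).mpr hc)
          push_neg at hnot
          obtain ⟨w, hw1, hw2, hw3⟩ := hnot hu
          obtain ⟨w', hw'⟩ := ih w (by omega) hw2
          exact ⟨w', hw'.1, by omega, le_trans hw'.2.2 hw3⟩
  have hcard2 : 2 ≤ T.card := by
    have hsub : ({0, n} : Finset ℕ) ⊆ T := by
      intro x hx
      simp only [Finset.mem_insert, Finset.mem_singleton] at hx
      rcases hx with rfl | rfl
      exacts [h0T, hnT]
    have : ({0, n} : Finset ℕ).card = 2 := by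
      rw [Finset.card_insert_of_notMem (by simp; omega), Finset.card_singleton]
    rw [← this]
    exact Finset.card_le_card hsub
  set m := T.card - 1 with hm
  have hTcard : T.card = m + 1 := by omega
  have hm1 : 1 ≤ m := by omega
  set e := T.orderIsoOfFin hTcard with he
  set t : ℕ → ℕ := fun j => (e ⟨min j m, by omega⟩ : ℕ) with ht
  have tmono : ∀ j j', j ≤ j' → t j ≤ t j' := by
    intro j j' hjj
    have hle : (⟨min j m, by omega⟩ : Fin (m+1)) ≤ ⟨min j' m, by omega⟩ := by
      rw [Fin.mk_le_mk]; omega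
    exact Subtype.coe_le_coe.mpr (e.le_iff_le.mpr hle)
  have tstrict : ∀ j j', j < j' → j' ≤ m → t j < t j' := by
    intro j j' h1 h2
    have hlt : (⟨min j m, by omega⟩ : Fin (m+1)) < ⟨min j' m, by omega⟩ := by
      rw [Fin.mk_lt_mk]; omega
    exact Subtype.coe_lt_coe.mpr (e.lt_iff_lt.mpr hlt)
  have tmem : ∀ j, t j ∈ T := fun j => (e ⟨min j m, by omega⟩).2
  have tsurj : ∀ x, x ∈ T → ∃ j, j ≤ m ∧ t j = x := by
    intro x hx
    set i := e.symm ⟨x, hx⟩ with hi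
    have hilt : (i : ℕ) < m + 1 := i.isLt
    refine ⟨(i : ℕ), by omega, ?_⟩
    have h1 : (⟨min (i : ℕ) m, by omega⟩ : Fin (m+1)) = i := by
      apply Fin.ext; simp only; omega
    show ((e ⟨min (i : ℕ) m, by omega⟩ : _) : ℕ) = x
    rw [h1, hi, OrderIso.apply_symm_apply]
  have htn : ∀ j, t j ≤ n := fun j => ((hmemT _).mp (tmem j)).1
  have ht0 : t 0 = 0 := by
    obtain ⟨j, hj, hje⟩ := tsurj 0 h0T
    have := tmono 0 j (Nat.zero_le j)
    omega
  have htm : t m = n := by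
    obtain ⟨j, hj, hje⟩ := tsurj n hnT
    have h1 := tmono j m hj
    have h2 := htn m
    omega
  have L2 : ∀ j, 1 ≤ j → j ≤ m → ∀ u, t (j-1) < u → u ≤ t j → b (t j) ≤ b u := by
    intro j hj1 hjm u hu1 hu2
    obtain ⟨w, hwT, hw1, hw2⟩ := L1 (n - u) u (le_refl _) (le_trans hu2 (htn j))
    obtain ⟨k, hkm, hke⟩ := tsurj w hwT
    have hjk : j ≤ k := by
      by_contra hc
      have : t k ≤ t (j-1) := tmono k (j-1) (by omega)
      omega
    have htjw : t j ≤ w := by rw [← hke]; exact tmono j k hjk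
    rcases eq_or_lt_of_le htjw with heq | hlt
    · rw [heq]; exact hw2
    · have hprop := ((hmemT (t j)).mp (tmem j)).2
      have hwn : w ≤ n := ((hmemT w).mp hwT).1
      exact le_trans (le_of_lt (hprop w hlt hwn)) hw2
  have L3 : ∀ j, 1 ≤ j → j ≤ m → b (t (j-1)) < b (t j) := by
    intro j hj1 hjm
    have hprop := ((hmemT (t (j-1))).mp (tmem (j-1))).2
    exact hprop (t j) (tstrict (j-1) j (by omega) hjm) (htn j)
  refine ⟨m, hm1, (fun j i => if i = t (j-1) + 1 then b (t j) - b (t (j-1)) else 0),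
    (fun j i => (if t (j-1) + 1 ≤ i ∧ i ≤ t j then coeffFn p i else 0) -
       (if i = t (j-1) + 1 then b (t j) - b (t (j-1)) else 0)),
    (fun j => t (j-1) + 1), t, ht0, htm, ?_, ?_⟩
  · intro i
    beta_reduce
    have hPQ : ∀ j, ((if i = t (j-1) + 1 then b (t j) - b (t (j-1)) else 0) +
        ((if t (j-1) + 1 ≤ i ∧ i ≤ t j then coeffFn p i else 0) -
         (if i = t (j-1) + 1 then b (t j) - b (t (j-1)) else 0)))
        = (if t (j-1) + 1 ≤ i ∧ i ≤ t j then coeffFn p i else 0) := fun j => by ring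
    rw [Finset.sum_congr rfl fun j _ => hPQ j]
    by_cases hi : 1 ≤ i ∧ i ≤ n
    · have hex : ∃ j, i ≤ t j := ⟨m, by rw [htm]; exact hi.2⟩
      set j := Nat.find hex with hj
      have hji : i ≤ t j := Nat.find_spec hex
      have hjm : j ≤ m := Nat.find_min' hex (by rw [htm]; exact hi.2)
      have hj1 : 1 ≤ j := by
        rcases Nat.eq_zero_or_pos j with h | h
        · rw [h, ht0] at hji; omega
        · exact h
      have hj2 : t (j-1) < i := by
        have := Nat.find_min hex (show j - 1 < j by omega)
        omega
      rw [Finset.sum_eq_single_of_mem j (Finset.mem_Icc.mpr ⟨hj1, hjm⟩) ?_,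
        if_pos ⟨by omega, hji⟩]
      intro j' hj' hne'
      simp only [Finset.mem_Icc] at hj'
      rw [if_neg]
      rintro ⟨ha, hb'⟩
      rcases lt_or_gt_of_ne hne' with hlt | hgt
      · have : t j' ≤ t (j-1) := tmono j' (j-1) (by omega)
        omega
      · have : t j ≤ t (j'-1) := tmono j (j'-1) (by omega)
        omega
    · have hz : ∀ j ∈ Finset.Icc 1 m,
          (if t (j-1) + 1 ≤ i ∧ i ≤ t j then coeffFn p i else 0) = 0 := by
        intro j hj
        rw [if_neg]
        rintro ⟨ha, hb'⟩
        have := htn j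
        omega
      rw [Finset.sum_eq_zero hz]
      rcases Nat.eq_zero_or_pos i with rfl | hpos
      · simp [coeffFn]
      · have hni : n < i := by omega
        simp only [coeffFn, if_neg (by omega : ¬ i = 0)]
        exact List.getD_eq_default _ _ (by omega)
  · intro j hj
    beta_reduce
    simp only [Finset.mem_Icc] at hj
    obtain ⟨hj1, hjm⟩ := hj
    have htlt : t (j-1) < t j := tstrict (j-1) j (by omega) hjm
    have hd : 0 < b (t j) - b (t (j-1)) := by have := L3 j hj1 hjm; omega
    have hQsum : ∀ u, t (j-1) + 1 ≤ u → u ≤ t j →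
        (∑ i ∈ Finset.Icc (t (j-1) + 1) u,
          ((if t (j-1) + 1 ≤ i ∧ i ≤ t j then coeffFn p i else 0) -
           (if i = t (j-1) + 1 then b (t j) - b (t (j-1)) else 0)))
        = b u - b (t j) := by
      intro u hu1 hu2
      rw [Finset.sum_sub_distrib]
      have e1 : ∑ i ∈ Finset.Icc (t (j-1) + 1) u,
          (if t (j-1) + 1 ≤ i ∧ i ≤ t j then coeffFn p i else 0)
          = ∑ i ∈ Finset.Icc (t (j-1) + 1) u, coeffFn p i := by
        refine Finset.sum_congr rfl fun i hi => ?_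
        simp only [Finset.mem_Icc] at hi
        rw [if_pos ⟨hi.1, by omega⟩]
      have e2 : ∑ i ∈ Finset.Icc (t (j-1) + 1) u,
          (if i = t (j-1) + 1 then b (t j) - b (t (j-1)) else 0)
          = b (t j) - b (t (j-1)) := by
        rw [Finset.sum_ite_eq' (Finset.Icc (t (j-1) + 1) u) (t (j-1) + 1)
            (fun _ => b (t j) - b (t (j-1))),
          if_pos (Finset.mem_Icc.mpr ⟨le_refl _, hu1⟩)]
      rw [e1, e2, sum_Icc_coeff p _ u (by omega)]
      ring
    refine ⟨Nat.lt_succ_self _, by omega, ?_, ?_, ?_, ?_, ?_⟩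
    · intro i hi
      rw [if_neg]
      intro hc
      apply hi
      rw [hc]
      simp
    · intro i hi
      simp only [Finset.mem_Icc] at hi
      have hieq : i = t (j-1) + 1 := by omega
      rw [if_pos hieq]
      exact hd
    · intro i hi
      simp only [Finset.mem_Icc, not_and_or, not_le] at hi
      rw [if_neg (by omega), if_neg (by omega)]
      ring
    · intro u hu
      simp only [Finset.mem_Icc] at hu
      rw [hQsum u hu.1 hu.2]
      have := L2 j hj1 hjm u (by omega) hu.2
      omega
    · rw [hQsum (t j) (by omega) (le_refl _)]
      ring
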